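/- Let O, A, B ∈ ℝ² with A ≠ B, and let C be a point of the closed segment [O,B] and D a point of the closed segment [O,A]. Then the planar Lebesgue measure satisfies vol( conv{O,A,B} ∖ conv{O,C,D} ) ≤ ‖A − B‖ · max{ d(C, ℓ_{A,B}), d(D, ℓ_{A,B}) }, where ℓ_{A,B} is the line through A and B and d is the Euclidean distance. -/

import Mathlib

open MeasureTheory Set Metric Filter
open scoped Classical ENNReal Topology Pointwise RealInnerProductSpace

noncomputable section

/-! ## The plane and the lattice -/

abbrev Z2 := ℤ × ℤ
abbrev E2 := EuclideanSpace ℝ (Fin 2)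

/-- the point of `ℝ²` with the given coordinates -/
def mk2 (a b : ℝ) : E2 := (WithLp.equiv 2 (Fin 2 → ℝ)).symm ![a, b]

/-- the embedding of the lattice `ℤ²` into the Euclidean plane -/
def toE2 (v : Z2) : E2 := mk2 v.1 v.2

/-- coordinatewise integer part -/
def fl (x : E2) : Z2 := (⌊x 0⌋, ⌊x 1⌋)

/-- nearest-neighbour adjacency on `ℤ²` -/
def Adj (a b : Z2) : Prop := (a.1 - b.1).natAbs + (a.2 - b.2).natAbs = 1

instance (a b : Z2) : Decidable (Adj a b) := by unfold Adj; infer_instance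

/-- strict lexicographic order on `ℤ²` (used to orient edges) -/
def lexLt (a b : Z2) : Prop := a.1 < b.1 ∨ (a.1 = b.1 ∧ a.2 < b.2)

instance (a b : Z2) : Decidable (lexLt a b) := by unfold lexLt; infer_instance

/-- weak lexicographic order on `ℤ²` -/
def lexLe (a b : Z2) : Prop := a.1 < b.1 ∨ (a.1 = b.1 ∧ a.2 ≤ b.2)

/-- a nearest-neighbour edge of `ℤ²`, recorded with lexicographically ordered endpoints -/
def IsEdge (e : Z2 × Z2) : Prop := Adj e.1 e.2 ∧ lexLt e.1 e.2

instance (e : Z2 × Z2) : Decidable (IsEdge e) := by unfold IsEdge; infer_instance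

abbrev Edge := {e : Z2 × Z2 // IsEdge e}

/-- a configuration: an assignment of open/closed to every edge of `ℤ²` -/
abbrev Config := Edge → Bool

/-- the edge between the adjacent sites `a` and `b` is open -/
def EOpen (ω : Config) (a b : Z2) : Prop :=
  (∃ h : IsEdge (a, b), ω ⟨(a, b), h⟩ = true) ∨ ∃ h : IsEdge (b, a), ω ⟨(b, a), h⟩ = true

/-- `x ↔ y` : `x` and `y` are joined by a path of open edges -/
def Conn (ω : Config) (x y : Z2) : Prop := Relation.ReflTransGen (EOpen ω) x y

/-- the edge between `a` and `b` is open and contained (as a subset of `ℝ²`) in `A` -/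
def EOpenIn (ω : Config) (A : Set E2) (a b : Z2) : Prop :=
  EOpen ω a b ∧ segment ℝ (toE2 a) (toE2 b) ⊆ A

/-- `x ↔^A y` : `x` and `y` are joined by a path of open edges contained in `A` -/
def ConnIn (ω : Config) (A : Set E2) (x y : Z2) : Prop :=
  Relation.ReflTransGen (EOpenIn ω A) x y

/-! ## Circuits -/

/-- a cycle in `ℤ²` that visits no vertex twice -/
structure Circuit where
  len : ℕ
  four_le : 4 ≤ len
  f : ZMod len → Z2
  inj : Function.Injective f
  adj : ∀ i, Adj (f i) (f (i + 1))

/-- the closed subset of `ℝ²` formed by the unit edges of the cycle -/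
def Circuit.carrier (Γ : Circuit) : Set E2 :=
  ⋃ i, segment ℝ (toE2 (Γ.f i)) (toE2 (Γ.f (i + 1)))

/-- all edges of the circuit are open -/
def Circuit.IsOpenCir (Γ : Circuit) (ω : Config) : Prop := ∀ i, EOpen ω (Γ.f i) (Γ.f (i + 1))

/-- `INT S`: the union of the bounded connected components of `ℝ² ∖ S`
(for a circuit, the bounded connected component of the complement) -/
def INT (S : Set E2) : Set E2 :=
  {x | x ∉ S ∧ Bornology.IsBounded (connectedComponentIn Sᶜ x)}

/-- planar Lebesgue measure, as a real number -/
def vol (S : Set E2) : ℝ := (volume S).toReal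

def IsCircuit (S : Set E2) : Prop := ∃ Γ : Circuit, Γ.carrier = S

/-- `S` is the carrier of an open circuit -/
def IsOpenCircuit (ω : Config) (S : Set E2) : Prop := ∃ Γ : Circuit, Γ.carrier = S ∧ Γ.IsOpenCir ω

/-- an outermost open circuit -/
def IsOutermost (ω : Config) (S : Set E2) : Prop :=
  IsOpenCircuit ω S ∧ ∀ S', IsOpenCircuit ω S' → INT S ⊆ INT S' → S' = S

/-- `Γ₀`: the unique outermost open circuit that surrounds the origin when exactly one
such circuit exists, and `∅` otherwise -/
def Gamma0 (ω : Config) : Set E2 :=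
  if h : ∃! S : Set E2, IsOutermost ω S ∧ (0 : E2) ∈ INT S then h.exists.choose else ∅

/-- `V(Γ) = Γ ∩ ℤ²` -/
def VSet (S : Set E2) : Set E2 := S ∩ Set.range toE2

/-- the boundary of the convex hull of `V(Γ)` -/
def hullB (S : Set E2) : Set E2 := frontier (convexHull ℝ (VSet S))

/-- maximum local roughness -/
def MLR (S : Set E2) : ℝ := sSup ((fun x => infDist x (hullB S)) '' VSet S)

/-- maximum facet length -/
def MFL (S : Set E2) : ℝ :=
  sSup {r : ℝ | ∃ x y : E2, r = dist x y ∧ segment ℝ x y ⊆ hullB S}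

/-- conditional probability `P(A ∣ B)` -/
def cP (P : Measure Config) (A B : Set Config) : ℝ := (P (A ∩ B)).toReal / (P B).toReal

/-! ## The random cluster measure -/

/-- the edges with both endpoints in `Λ` -/
def edgesIn (Λ : Finset Z2) : Finset (Z2 × Z2) := (Λ ×ˢ Λ).filter IsEdge

/-- a configuration on the edges within `Λ` -/
abbrev LConfig (Λ : Finset Z2) := {e // e ∈ edgesIn Λ} → Bool

def locOpen (Λ : Finset Z2) (η : LConfig Λ) (a b : Z2) : Prop :=
  (∃ h : (a, b) ∈ edgesIn Λ, η ⟨(a, b), h⟩ = true) ∨ ∃ h : (b, a) ∈ edgesIn Λ, η ⟨(b, a), h⟩ = true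

/-- `k(η)`: the number of connected components of the graph on `Λ` whose edge set is the
set of `η`-open edges within `Λ` -/
def kComp (Λ : Finset Z2) (η : LConfig Λ) : ℕ :=
  Set.ncard {C : Set Z2 | ∃ a ∈ Λ, C = {b | b ∈ Λ ∧ Relation.ReflTransGen (locOpen Λ η) a b}}

/-- the random-cluster weight `p^{#open} (1-p)^{#closed} q^{k(η)}` -/
def rcWeight (p q : ℝ) (Λ : Finset Z2) (η : LConfig Λ) : ℝ :=
  p ^ (Finset.univ.filter fun e => η e = true).card *
    (1 - p) ^ (Finset.univ.filter fun e => η e = false).card * q ^ kComp Λ η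

/-- the free random cluster probability on `Λ` of a set of local configurations -/
def rcProb (p q : ℝ) (Λ : Finset Z2) (S : Set (LConfig Λ)) : ℝ :=
  (∑ η : LConfig Λ, if η ∈ S then rcWeight p q Λ η else 0) / ∑ η : LConfig Λ, rcWeight p q Λ η

/-- the box `Λ_N = {-N, …, N}²` -/
def box (N : ℕ) : Finset Z2 := Finset.Icc (-(N : ℤ)) (N : ℤ) ×ˢ Finset.Icc (-(N : ℤ)) (N : ℤ)

/-- the hypotheses on the subcritical random-cluster measure `P` with parameters `p, q`:
(i) finite-volume free random-cluster measures on the boxes `Λ_N` converge to `P` on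
cylinder events; (ii) exponential decay of connectivity. -/
def IsSubcriticalRC (p q : ℝ) (P : Measure Config) : Prop :=
  (∀ (F : Finset Edge) (ζ : Edge → Bool),
      Tendsto
        (fun N : ℕ => rcProb p q (box N)
          {η | ∀ e ∈ F, ∀ h : (e : Z2 × Z2) ∈ edgesIn (box N), η ⟨(e : Z2 × Z2), h⟩ = ζ e})
        atTop (𝓝 ((P {ω | ∀ e ∈ F, ω e = ζ e}).toReal))) ∧
  ∃ c C : ℝ, 0 < c ∧ 0 < C ∧ ∀ N : ℕ,
    (P {ω | ∃ x : Z2, x ∉ box N ∧ Conn ω 0 x}).toReal ≤ C * Real.exp (-c * N)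

/-! ## The Wulff shape, global distortion, centring and the event `AREA` -/

/-- the Wulff shape `λ • ⋂_{u ∈ S¹} {t : ⟨t,u⟩ ≤ ξ(u)}` -/
def wulff (ξ : E2 → ℝ) (lam : ℝ) : Set E2 :=
  lam • ⋂ u ∈ sphere (0 : E2) 1, {t : E2 | (inner ℝ t u : ℝ) ≤ ξ u}

/-- the Hausdorff distance of `S` from the translate by `z` of `n ∂𝒲` -/
def gdVal (ξ : E2 → ℝ) (lam : ℝ) (n : ℕ) (z : Z2) (S : Set E2) : ℝ :=
  hausdorffDist ((fun y => y + toE2 z) '' ((n : ℝ) • frontier (wulff ξ lam))) S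

/-- global distortion -/
def GD (ξ : E2 → ℝ) (lam : ℝ) (n : ℕ) (S : Set E2) : ℝ := ⨅ z : Z2, gdVal ξ lam n z S

/-- `z` is the lexicographically minimal minimiser in the definition of `GD` -/
def IsCen (ξ : E2 → ℝ) (lam : ℝ) (n : ℕ) (S : Set E2) (z : Z2) : Prop :=
  gdVal ξ lam n z S = GD ξ lam n S ∧ ∀ z', gdVal ξ lam n z' S = GD ξ lam n S → lexLe z z'

/-- the centre of a circuit -/
def cen (ξ : E2 → ℝ) (lam : ℝ) (n : ℕ) (S : Set E2) : Z2 :=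
  if h : ∃ z, IsCen ξ lam n S z then h.choose else 0

/-- the event `AREA_{0,A} = {|INT(Γ₀)| ≥ A} ∩ {cen(Γ₀) = 0}` (centring at scale `n`) -/
def AREA (ξ : E2 → ℝ) (lam : ℝ) (n : ℕ) (A : ℝ) : Set Config :=
  {ω | A ≤ vol (INT (Gamma0 ω)) ∧ cen ξ lam n (Gamma0 ω) = 0}

/-- the hypotheses on the inverse correlation length `ξ` and the Wulff normalisation `lam` -/
def WulffHyp (P : Measure Config) (ξ : E2 → ℝ) (lam : ℝ) : Prop :=
  (∀ x : E2,
      Tendsto (fun k : ℕ => -((k : ℝ)⁻¹) * Real.log ((P {ω | Conn ω 0 (fl ((k : ℝ) • x))}).toReal))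
        atTop (𝓝 (ξ x))) ∧
    0 < lam ∧ volume (wulff ξ lam) = 1

/-! ## Angles, cones and sectors -/

/-- the angle between two vectors of `ℝ²` -/
def ang (u w : E2) : ℝ := InnerProductGeometry.angle u w

/-- rotation by `π/2` counterclockwise -/
def perp (v : E2) : E2 := mk2 (-(v 1)) (v 0)

/-- the forward cone `C^F_{π/2 - q₀}(v)` -/
def coneF (q₀ : ℝ) (v : E2) : Set E2 := insert v {w | ang (w - v) (perp v) ≤ Real.pi / 2 - q₀}

/-- the backward cone `C^B_{π/2 - q₀}(v)` -/
def coneB (q₀ : ℝ) (v : E2) : Set E2 := insert v {w | ang (w - v) (-perp v) ≤ Real.pi / 2 - q₀}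

/-- the cone `W_{v,c}` with apex `0` about the direction of `v`, of half-aperture `c` -/
def coneDir (v : E2) (c : ℝ) : Set E2 := insert 0 {z | z ≠ 0 ∧ ang z v ≤ c}

/-- the argument of a point of the plane -/
def argOf (z : E2) : ℝ := Complex.arg ⟨z 0, z 1⟩

/-- reduction modulo `2π` to `[0, 2π)` -/
def mod2pi (t : ℝ) : ℝ := t - 2 * Real.pi * ⌊t / (2 * Real.pi)⌋

/-- the unit vector of argument `θ` -/
def dirE (θ : ℝ) : E2 := mk2 (Real.cos θ) (Real.sin θ)

/-- the closed angular sector `A_{x,y}` with apex `0` swept counterclockwise from the ray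
through `x` to the ray through `y` -/
def sector (x y : E2) : Set E2 :=
  insert 0 {z | ∃ r s : ℝ, 0 < r ∧ 0 ≤ s ∧ s ≤ mod2pi (argOf y - argOf x) ∧
    z = r • dirE (argOf x + s)}

/-! ## Open clusters, open paths, good area capture -/

/-- the open cluster of `x`, as the union of the closed open edges of its component -/
def cluster (ω : Config) (x : Z2) : Set E2 :=
  ⋃ (a : Z2) (b : Z2) (_ : Conn ω x a ∧ EOpen ω a b), segment ℝ (toE2 a) (toE2 b)

/-- the open cluster of `x` within the region `A` -/
def clusterIn (ω : Config) (A : Set E2) (x : Z2) : Set E2 :=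
  ⋃ (a : Z2) (b : Z2) (_ : ConnIn ω A x a ∧ EOpenIn ω A a b), segment ℝ (toE2 a) (toE2 b)

/-- the common open cluster `γ'_{x,y}` of `x` and `y` -/
def cluster2 (ω : Config) (x y : Z2) : Set E2 := cluster ω x ∩ cluster ω y

/-- `fluc_{x,y}(S)`: the maximal distance of a point of `S` from the segment `[x,y]` -/
def fluc (x y : Z2) (S : Set E2) : ℝ :=
  sSup ((fun z => infDist z (segment ℝ (toE2 x) (toE2 y))) '' S)

/-- `S` is (the carrier of) an open path from `x` to `y` contained in `A` -/
def IsOpenPathIn (ω : Config) (A : Set E2) (x y : Z2) (S : Set E2) : Prop :=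
  ∃ l : List Z2, l.Nodup ∧ l.head? = some x ∧ l.getLast? = some y ∧
    List.Chain' (EOpenIn ω A) l ∧
    S = ⋃ p ∈ l.zip l.tail, segment ℝ (toE2 p.1) (toE2 p.2)

/-- the union of the bounded connected components of `A ∖ S` -/
def boundedCompIn (A S : Set E2) : Set E2 :=
  {z | z ∈ A \ S ∧ Bornology.IsBounded (connectedComponentIn (A \ S) z)}

/-- the event `GAC(x,y,ε)` of `ε`-good area capture in the sector `A_{x,y}` -/
def GAC (q₀ : ℝ) (ω : Config) (x y : Z2) (ε : ℝ) : Prop :=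
  ConnIn ω (sector (toE2 x) (toE2 y)) x y ∧
  clusterIn ω (sector (toE2 x) (toE2 y)) x ⊆
    coneF (q₀ / 2) (toE2 x) ∩ coneB (q₀ / 2) (toE2 y) ∧
  ∃ S : Set E2,
    (IsOpenPathIn ω (sector (toE2 x) (toE2 y)) x y S ∧
      ∀ S', IsOpenPathIn ω (sector (toE2 x) (toE2 y)) x y S' →
        boundedCompIn (sector (toE2 x) (toE2 y)) S ⊆
          boundedCompIn (sector (toE2 x) (toE2 y)) S' → S' = S) ∧
    diam S ≤ 2 * dist (toE2 x) (toE2 y) ∧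
    vol (convexHull ℝ {0, toE2 x, toE2 y}) +
        ε * dist (toE2 x) (toE2 y) ^ (3 / 2 : ℝ) *
          Real.log (dist (toE2 x) (toE2 y)) ^ (1 / 2 : ℝ) ≤
      vol (boundedCompIn (sector (toE2 x) (toE2 y)) S)

/-- the edge `e`, as a closed unit segment of `ℝ²` -/
def edgeSeg (e : Edge) : Set E2 := segment ℝ (toE2 (e : Z2 × Z2).1) (toE2 (e : Z2 × Z2).2)

/-! ## Mixing properties -/

/-- the σ-algebra `σ_A` generated by the edge variables in `A` -/
def sigmaOn (A : Set Edge) : MeasurableSpace Config :=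
  MeasurableSpace.comap (fun (ω : Config) (e : A) => ω (e : Edge)) inferInstance

/-- `V(A)`: the endpoints of the edges of `A` -/
def VE (A : Set Edge) : Set Z2 := {v | ∃ e ∈ A, (e : Z2 × Z2).1 = v ∨ (e : Z2 × Z2).2 = v}

/-- the ratio-weak-mixing property with constants `Cr, lam` -/
def RWM (Cr lam : ℝ) (P : Measure Config) : Prop :=
  ∀ 𝒟 ℱ : Set Edge,
    Cr * ∑' (x : VE 𝒟) (y : VE ℱ), Real.exp (-lam * dist (toE2 (x : Z2)) (toE2 (y : Z2))) < 1 →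
    ∀ D F : Set Config, MeasurableSet[sigmaOn 𝒟] D → MeasurableSet[sigmaOn ℱ] F →
      0 < (P D).toReal * (P F).toReal →
      |(P (D ∩ F)).toReal / ((P D).toReal * (P F).toReal) - 1| ≤
        Cr * ∑' (x : VE 𝒟) (y : VE ℱ), Real.exp (-lam * dist (toE2 (x : Z2)) (toE2 (y : Z2)))

/-- the bounded energy property with constant `cbe` -/
def BddEnergy (cbe : ℝ) (P : Measure Config) : Prop :=
  ∀ (e : Edge) (F : Set Config), MeasurableSet[sigmaOn {e}ᶜ] F →
    cbe * (P F).toReal ≤ (P (F ∩ {ω | ω e = true})).toReal ∧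
      (P (F ∩ {ω | ω e = true})).toReal ≤ (1 - cbe) * (P F).toReal

/-- `κ_m(A,B)` -/
def kappa (lam m : ℝ) (A B : Set Edge) : ℝ :=
  ∑' (x : VE A) (y : VE B),
    if m ≤ dist (toE2 (x : Z2)) (toE2 (y : Z2)) then
      Real.exp (-lam * dist (toE2 (x : Z2)) (toE2 (y : Z2))) else 0

/-- `φ_m(A,B)`: the number of pairs of edges of `A × B` within distance `m` of each other -/
def phiCount (m : ℝ) (A B : Set Edge) : ℕ∞ :=
  {ab : Edge × Edge | ab.1 ∈ A ∧ ab.2 ∈ B ∧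
    ∃ u ∈ edgeSeg ab.1, ∃ v ∈ edgeSeg ab.2, dist u v ≤ m}.encard

/-- `A` and `B` are `(m₀, C₂)`-well separated -/
def WellSep (Cr lam : ℝ) (m₀ C₂ : ℕ) (A B : Set Edge) : Prop :=
  A ∩ B = ∅ ∧ kappa lam m₀ A B ≤ 1 / (2 * Cr) ∧ phiCount (m₀ : ℝ) A B ≤ (C₂ : ℕ∞)

/-! ## Regeneration sites -/

/-- the set of `Γ`-regeneration sites -/
def RG (q₀ c₀ : ℝ) (Γ : Set E2) : Set Z2 :=
  {v | toE2 v ∈ Γ ∧ Γ ∩ coneDir (toE2 v) c₀ ⊆ coneF q₀ (toE2 v) ∪ coneB q₀ (toE2 v)}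

/-- `θ_RG^MAX(Γ)`: the maximal angle of a sector rooted at the origin free of regeneration
sites -/
def thetaRGMax (q₀ c₀ : ℝ) (Γ : Set E2) : ℝ :=
  sSup {r : ℝ | r ∈ Set.Icc 0 (2 * Real.pi) ∧
    ∃ a : E2, ‖a‖ = 1 ∧ coneDir a (r / 2) ∩ (toE2 '' RG q₀ c₀ Γ) = ∅}

/-- the counterclockwise angular displacement from `x` to `u` -/
def ccwDisp (x u : E2) : ℝ := mod2pi (argOf u - argOf x)

/-- `u` is a regeneration site first encountered in a counterclockwise (or clockwise) angular
search about the origin beginning at `x` -/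
def IsFirstRG (q₀ c₀ : ℝ) (Γ : Set E2) (x u : Z2) : Prop :=
  u ∈ RG q₀ c₀ Γ ∧
    ((∀ w ∈ RG q₀ c₀ Γ, ccwDisp (toE2 x) (toE2 u) ≤ ccwDisp (toE2 x) (toE2 w)) ∨
      ∀ w ∈ RG q₀ c₀ Γ, ccwDisp (toE2 u) (toE2 x) ≤ ccwDisp (toE2 w) (toE2 x))

/-- the maximum point-to-regeneration-site distance -/
def MPRG (q₀ c₀ : ℝ) (Γ : Set E2) : ℝ :=
  sSup {d : ℝ | ∃ x : Z2, toE2 x ∈ Γ ∧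
    ∃ u : Z2, IsFirstRG q₀ c₀ Γ x u ∧ d = dist (toE2 x) (toE2 u)}

/-! ## Translation of configurations -/

/-- the translate of the edge `e` by `v` -/
def shiftE (v : Z2) (e : Edge) : Edge :=
  ⟨((e.1.1.1 + v.1, e.1.1.2 + v.2), (e.1.2.1 + v.1, e.1.2.2 + v.2)), by
    obtain ⟨h1, h2⟩ := e.2
    unfold IsEdge Adj lexLt at *
    exact ⟨by simp only at h1 ⊢; omega, by simp only at h2 ⊢; omega⟩⟩

/-- the shifted configuration `ω_v(e) = ω(e + v)` -/
def shiftC (v : Z2) (ω : Config) : Config := fun e => ω (shiftE v e)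


/-! ### Auxiliary lemmas for the quadrilateral area bound -/

private lemma abs_det_le_aux (v w : E2) : |v 0 * w 1 - v 1 * w 0| ≤ ‖v‖ * ‖w‖ := by
  rw [EuclideanSpace.norm_eq, EuclideanSpace.norm_eq]
  simp only [Fin.sum_univ_two, Real.norm_eq_abs, sq_abs]
  rw [← Real.sqrt_mul (by positivity)]
  rw [show |v 0 * w 1 - v 1 * w 0| = Real.sqrt ((v 0 * w 1 - v 1 * w 0)^2) by
    rw [Real.sqrt_sq_eq_abs]]
  apply Real.sqrt_le_sqrt
  nlinarith [sq_nonneg (v 0 * w 0 + v 1 * w 1)]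

private lemma tri_mem_iff_aux (O A B x : E2) :
    x ∈ convexHull ℝ ({O, A, B} : Set E2) ↔
      ∃ a b c : ℝ, 0 ≤ a ∧ 0 ≤ b ∧ 0 ≤ c ∧ a + b + c = 1 ∧ a • O + b • A + c • B = x := by
  rw [show ({O, A, B} : Set E2) = insert O {A, B} from rfl,
    convexHull_insert ⟨A, by simp⟩]
  constructor
  · intro hx
    rw [mem_convexJoin] at hx
    obtain ⟨o, ho, z, hz, hxz⟩ := hx
    rw [convexHull_pair] at hz
    rw [Set.mem_singleton_iff] at ho
    subst ho
    obtain ⟨p, q, hp, hq, hpq, rfl⟩ := hz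
    obtain ⟨a, t, ha, ht, hat, hx⟩ := hxz
    exact ⟨a, t * p, t * q, ha, mul_nonneg ht hp, mul_nonneg ht hq, by nlinarith,
      by rw [← hx]; module⟩
  · rintro ⟨a, b, c, ha, hb, hc, habc, rfl⟩
    rw [mem_convexJoin]
    rcases eq_or_lt_of_le (add_nonneg hb hc) with h0 | h0
    · refine ⟨O, rfl, A, by simp [convexHull_pair, left_mem_segment], a, 0, ha, le_refl _,
        by nlinarith, ?_⟩
      have hb0 : b = 0 := by linarith
      have hc0 : c = 0 := by linarith
      simp [hb0, hc0]
    · refine ⟨O, rfl, (b / (b + c)) • A + (c / (b + c)) • B, ?_, a, b + c, ha, h0.le,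
        by linarith, ?_⟩
      · rw [convexHull_pair]
        exact ⟨b / (b + c), c / (b + c), by positivity, by positivity, by field_simp, rfl⟩
      · match_scalars <;> field_simp

private lemma infDist_line_ge_aux (A B P : E2) (hAB : A ≠ B) :
    |(B 0 - A 0) * (P 1 - A 1) - (B 1 - A 1) * (P 0 - A 0)| / ‖B - A‖
      ≤ infDist P (affineSpan ℝ ({A, B} : Set E2) : Set E2) := by
  have hL : 0 < ‖B - A‖ := norm_pos_iff.mpr (sub_ne_zero.mpr (Ne.symm hAB))
  rw [infDist_eq_iInf]
  haveI : Nonempty (affineSpan ℝ ({A, B} : Set E2) : Set E2) :=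
    ⟨⟨A, left_mem_affineSpan_pair ℝ A B⟩⟩
  apply le_ciInf
  rintro ⟨y, hy⟩
  have hy' : (y - A) +ᵥ A ∈ affineSpan ℝ ({A, B} : Set E2) := by
    simpa using hy
  obtain ⟨r, hr⟩ := vadd_left_mem_affineSpan_pair.mp hy'
  rw [vsub_eq_sub] at hr
  have h0 := congrArg (fun v : E2 => v 0) hr
  have h1 := congrArg (fun v : E2 => v 1) hr
  simp only [PiLp.smul_apply, PiLp.sub_apply, smul_eq_mul] at h0 h1
  rw [div_le_iff₀ hL, dist_eq_norm]
  have key : |(B 0 - A 0) * (P 1 - A 1) - (B 1 - A 1) * (P 0 - A 0)|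
      = |(B - A) 0 * (P - y) 1 - (B - A) 1 * (P - y) 0| := by
    simp only [PiLp.sub_apply]
    congr 1
    linear_combination (B 1 - A 1) * h0 - (B 0 - A 0) * h1
  rw [key]
  calc |(B - A) 0 * (P - y) 1 - (B - A) 1 * (P - y) 0|
      ≤ ‖B - A‖ * ‖P - y‖ := abs_det_le_aux _ _
    _ = ‖P - y‖ * ‖B - A‖ := mul_comm _ _

set_option maxHeartbeats 1000000 in
/-- **The quadrilateral area bound.** For `C ∈ [O,B]` and `D ∈ [O,A]`,
`vol(conv{O,A,B} ∖ conv{O,C,D}) ≤ ‖A - B‖ max{d(C, ℓ_{A,B}), d(D, ℓ_{A,B})}`. -/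
theorem quadrilateral_area_bound (O A B C D : E2) (hAB : A ≠ B)
    (hC : C ∈ segment ℝ O B) (hD : D ∈ segment ℝ O A) :
    vol (convexHull ℝ {O, A, B} \ convexHull ℝ {O, C, D}) ≤
      ‖A - B‖ * max (infDist C (affineSpan ℝ {A, B} : Set E2))
        (infDist D (affineSpan ℝ {A, B} : Set E2)) := by
  classical
  have hvne : B - A ≠ 0 := sub_ne_zero.mpr (Ne.symm hAB)
  have hL : 0 < ‖B - A‖ := norm_pos_iff.mpr hvne
  set d := (B 0 - A 0) * (O 1 - A 1) - (B 1 - A 1) * (O 0 - A 0) with hd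
  set m := max (infDist C (affineSpan ℝ ({A, B} : Set E2) : Set E2))
    (infDist D (affineSpan ℝ ({A, B} : Set E2) : Set E2)) with hm
  have hm0 : 0 ≤ m := le_trans infDist_nonneg (le_max_left _ _)
  by_cases hd0 : d = 0
  · -- degenerate case: `O, A, B` collinear, the triangle is Lebesgue-null
    have hd0' : (B 0 - A 0) * (O 1 - A 1) - (B 1 - A 1) * (O 0 - A 0) = 0 := by
      rw [← hd]; exact hd0
    have hcases : B 0 - A 0 ≠ 0 ∨ B 1 - A 1 ≠ 0 := by
      by_contra hcon
      push_neg at hcon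
      refine hvne ?_
      ext i
      fin_cases i
      · exact hcon.1
      · exact hcon.2
    have hO : O ∈ affineSpan ℝ ({A, B} : Set E2) := by
      have hr : ∃ r : ℝ, r • (B -ᵥ A) = O - A := by
        rcases hcases with h | h
        · refine ⟨(O 0 - A 0) / (B 0 - A 0), ?_⟩
          ext i
          fin_cases i
          · simp only [vsub_eq_sub, PiLp.smul_apply, PiLp.sub_apply, smul_eq_mul, Fin.zero_eta, Fin.mk_one, Fin.isValue]
            field_simp
          · simp only [vsub_eq_sub, PiLp.smul_apply, PiLp.sub_apply, smul_eq_mul, Fin.zero_eta, Fin.mk_one, Fin.isValue]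
            field_simp
            linear_combination -hd0'
        · refine ⟨(O 1 - A 1) / (B 1 - A 1), ?_⟩
          ext i
          fin_cases i
          · simp only [vsub_eq_sub, PiLp.smul_apply, PiLp.sub_apply, smul_eq_mul, Fin.zero_eta, Fin.mk_one, Fin.isValue]
            field_simp
            linear_combination hd0'
          · simp only [vsub_eq_sub, PiLp.smul_apply, PiLp.sub_apply, smul_eq_mul, Fin.zero_eta, Fin.mk_one, Fin.isValue]
            field_simp
      have := vadd_left_mem_affineSpan_pair.mpr hr
      simpa using this
    have hTop : affineSpan ℝ ({A, B} : Set E2) ≠ ⊤ := by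
      intro htop
      set q : E2 := (WithLp.equiv 2 (Fin 2 → ℝ)).symm ![-(B 1 - A 1), B 0 - A 0] with hq
      have hq0 : q 0 = -(B 1 - A 1) := rfl
      have hq1 : q 1 = B 0 - A 0 := rfl
      have hqmem : q +ᵥ A ∈ affineSpan ℝ ({A, B} : Set E2) := by
        rw [htop]; trivial
      obtain ⟨r, hr⟩ := vadd_left_mem_affineSpan_pair.mp hqmem
      rw [vsub_eq_sub] at hr
      have h0 := congrArg (fun v : E2 => v 0) hr
      have h1 := congrArg (fun v : E2 => v 1) hr
      simp only [PiLp.smul_apply, PiLp.sub_apply, smul_eq_mul, hq0, hq1] at h0 h1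
      have e0 : r * (B 0 - A 0) * (B 1 - A 1) = -(B 1 - A 1) * (B 1 - A 1) := by
        linear_combination (B 1 - A 1) * h0
      have e1 : r * (B 1 - A 1) * (B 0 - A 0) = (B 0 - A 0) * (B 0 - A 0) := by
        linear_combination (B 0 - A 0) * h1
      have hsum : (B 0 - A 0)^2 + (B 1 - A 1)^2 = 0 := by
        linear_combination e0 - e1
      have h00 : B 0 - A 0 = 0 := by
        have h2 : (B 0 - A 0)^2 = 0 := by nlinarith [sq_nonneg (B 1 - A 1)]
        exact (pow_eq_zero_iff two_ne_zero).mp h2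
      have h11 : B 1 - A 1 = 0 := by
        have h2 : (B 1 - A 1)^2 = 0 := by nlinarith [sq_nonneg (B 0 - A 0)]
        exact (pow_eq_zero_iff two_ne_zero).mp h2
      refine hvne ?_
      ext i
      fin_cases i
      · exact h00
      · exact h11
    have hsub : convexHull ℝ ({O, A, B} : Set E2) ⊆
        (affineSpan ℝ ({A, B} : Set E2) : Set E2) := by
      apply convexHull_min _ (AffineSubspace.convex _)
      rintro x (rfl | rfl | rfl)
      · exact hO
      · exact left_mem_affineSpan_pair ℝ _ _
      · exact right_mem_affineSpan_pair ℝ _ _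
    have hvol0 : volume (convexHull ℝ ({O, A, B} : Set E2) \
        convexHull ℝ ({O, C, D} : Set E2)) = 0 :=
      measure_mono_null (Set.diff_subset.trans hsub)
        (Measure.addHaar_affineSubspace volume _ hTop)
    simp only [vol, hvol0, ENNReal.toReal_zero]
    exact mul_nonneg (norm_nonneg (A - B)) hm0
  · -- nondegenerate case
    have habs : 0 < |d| := abs_pos.mpr hd0
    set μ := m * ‖B - A‖ / |d| with hμdef
    have hμ0 : 0 ≤ μ := by positivity
    obtain ⟨uC, sC, huC, hsC, husC, hCeq⟩ := hC
    obtain ⟨uD, tD, huD, htD, hutD, hDeq⟩ := hD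
    have hdetC : (B 0 - A 0) * (C 1 - A 1) - (B 1 - A 1) * (C 0 - A 0) = uC * d := by
      have h0 := congrArg (fun v : E2 => v 0) hCeq
      have h1 := congrArg (fun v : E2 => v 1) hCeq
      simp only [PiLp.add_apply, PiLp.smul_apply, smul_eq_mul] at h0 h1
      have hss : sC = 1 - uC := by linarith
      subst hss
      rw [hd, ← h0, ← h1]
      ring
    have hdetD : (B 0 - A 0) * (D 1 - A 1) - (B 1 - A 1) * (D 0 - A 0) = uD * d := by
      have h0 := congrArg (fun v : E2 => v 0) hDeq
      have h1 := congrArg (fun v : E2 => v 1) hDeq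
      simp only [PiLp.add_apply, PiLp.smul_apply, smul_eq_mul] at h0 h1
      have htd : tD = 1 - uD := by linarith
      subst htd
      rw [hd, ← h0, ← h1]
      ring
    have hmC : uC * |d| ≤ m * ‖B - A‖ := by
      have h1 := infDist_line_ge_aux A B C hAB
      rw [hdetC, abs_mul, abs_of_nonneg huC, div_le_iff₀ hL] at h1
      have h2 : infDist C (affineSpan ℝ ({A, B} : Set E2) : Set E2) ≤ m := le_max_left _ _
      nlinarith
    have hmD : uD * |d| ≤ m * ‖B - A‖ := by
      have h1 := infDist_line_ge_aux A B D hAB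
      rw [hdetD, abs_mul, abs_of_nonneg huD, div_le_iff₀ hL] at h1
      have h2 : infDist D (affineSpan ℝ ({A, B} : Set E2) : Set E2) ≤ m := le_max_right _ _
      nlinarith
    -- the parallelogram `A + [0,1]•(B-A) + [0,μ]•(O-A)`
    set Mlin := Matrix.toLin (EuclideanSpace.basisFun (Fin 2) ℝ).toBasis
      (EuclideanSpace.basisFun (Fin 2) ℝ).toBasis
      !![B 0 - A 0, O 0 - A 0; B 1 - A 1, O 1 - A 1] with hMlin
    have hMapp : ∀ p : E2, Mlin p = p 0 • (B - A) + p 1 • (O - A) := by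
      intro p
      ext i
      simp [hMlin, Matrix.toLin_apply, Fin.sum_univ_two, Matrix.mulVec, dotProduct,
        EuclideanSpace.basisFun_apply, PiLp.smul_apply, PiLp.add_apply, PiLp.sub_apply]
      fin_cases i <;> simp [EuclideanSpace.single_apply] <;> ring
    set S := {x : E2 | x 0 ∈ Icc (0:ℝ) 1 ∧ x 1 ∈ Icc 0 μ} with hS
    have hsubset : convexHull ℝ ({O, A, B} : Set E2) \ convexHull ℝ ({O, C, D} : Set E2) ⊆
        (fun y => A + y) '' (Mlin '' S) := by
      rintro x ⟨hxT, hxT'⟩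
      obtain ⟨a, b, c, ha, hb, hc, habc, hxeq⟩ := (tri_mem_iff_aux O A B x).mp hxT
      have haμ : a ≤ μ := by
        by_contra hgt
        push_neg at hgt
        apply hxT'
        have hμd : μ * |d| = m * ‖B - A‖ := by
          rw [hμdef]; field_simp
        have haC : uC < a := by nlinarith
        have haD : uD < a := by nlinarith
        have hsC' : b + c < sC := by linarith
        have htD' : b + c < tD := by linarith
        have hsCpos : 0 < sC := lt_of_le_of_lt (add_nonneg hb hc) hsC'
        have htDpos : 0 < tD := lt_of_le_of_lt (add_nonneg hb hc) htD'
        have hkey : c / sC + b / tD ≤ 1 := by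
          rw [div_add_div _ _ hsCpos.ne' htDpos.ne', div_le_one (by positivity)]
          rcases le_total sC tD with hle | hle <;> nlinarith
        refine (tri_mem_iff_aux O C D x).mpr ⟨1 - c/sC - b/tD, c/sC, b/tD,
          by linarith, by positivity, by positivity, by ring, ?_⟩
        have huC' : uC = 1 - sC := by linarith
        have hutD' : uD = 1 - tD := by linarith
        have hb' : b = 1 - a - c := by linarith
        rw [← hxeq, ← hCeq, ← hDeq, huC', hutD', hb']
        match_scalars <;> field_simp <;> ring
      set q : E2 := (WithLp.equiv 2 (Fin 2 → ℝ)).symm ![c, a] with hq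
      have hq0 : q 0 = c := rfl
      have hq1 : q 1 = a := rfl
      have hqS : q ∈ S := by
        constructor
        · rw [hq0]; exact ⟨hc, by linarith⟩
        · rw [hq1]; exact ⟨ha, haμ⟩
      refine ⟨Mlin q, Set.mem_image_of_mem _ hqS, ?_⟩
      have hb' : b = 1 - a - c := by linarith
      rw [hMapp q, hq0, hq1, ← hxeq, hb']
      module
    -- volume computations
    have hvolS : volume S = ENNReal.ofReal μ := by
      have hms : MeasurableSet (Set.univ.pi ![Icc (0:ℝ) 1, Icc 0 μ]) :=
        MeasurableSet.univ_pi (fun i => by fin_cases i <;> exact measurableSet_Icc)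
      have hE : S = ((MeasurableEquiv.toLp 2 (Fin 2 → ℝ)).symm) ⁻¹'
          (Set.univ.pi ![Icc (0:ℝ) 1, Icc 0 μ]) := by
        ext x
        simp [hS, Set.mem_univ_pi, Fin.forall_fin_two]
      rw [hE, (EuclideanSpace.volume_preserving_symm_measurableEquiv_toLp
        (Fin 2)).measure_preimage hms.nullMeasurableSet, volume_pi_pi]
      simp [Fin.prod_univ_two, Real.volume_Icc]
    have hdet : LinearMap.det Mlin = d := by
      rw [hMlin, LinearMap.det_toLin, Matrix.det_fin_two_of, hd]
      ring
    have hvolP : volume ((fun y => A + y) '' (Mlin '' S)) =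
        ENNReal.ofReal |d| * ENNReal.ofReal μ := by
      rw [Set.image_add_left, measure_preimage_add,
        Measure.addHaar_image_linearMap, hdet, hvolS]
    simp only [vol]
    calc (volume (convexHull ℝ ({O, A, B} : Set E2) \
            convexHull ℝ ({O, C, D} : Set E2))).toReal
        ≤ (volume ((fun y => A + y) '' (Mlin '' S))).toReal := by
          apply ENNReal.toReal_mono
          · rw [hvolP]; exact ENNReal.mul_ne_top ENNReal.ofReal_ne_top ENNReal.ofReal_ne_top
          · exact measure_mono hsubset
      _ = |d| * μ := by
          rw [hvolP, ENNReal.toReal_mul, ENNReal.toReal_ofReal (abs_nonneg d),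
            ENNReal.toReal_ofReal hμ0]
      _ = m * ‖B - A‖ := by
          rw [hμdef]; field_simp
      _ = ‖A - B‖ * m := by rw [norm_sub_rev A B]; ring
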